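/- Fix κ = 0.9 and let 0 < τ ≤ 1/2. Let u, w : ℝ → ℝ be smooth, odd, 2π-periodic functions satisfying the implicit-explicit relation w(x) − κ² τ w''(x) = u(x) − τ (u(x)³ − u(x)) for all x ∈ ℝ. Assume E(u) ≤ π/2 − 0.001, ‖u‖_∞ ≤ 1.1 and ‖w‖_∞ ≤ 1.1. Then (1/(5τ)) ‖w − u‖_{L²(−π,π)}² + (κ²/2) ‖(w − u)'‖_{L²(−π,π)}² + E(w) ≤ E(u). -/

import Mathlib

open Real MeasureTheory Set

noncomputable section

/-- An odd zero-up ground state for parameter `κ`: a `2π`-periodic, odd, twice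
continuously differentiable function `U : ℝ → ℝ` satisfying
`κ² U'' + U − U³ = 0` on `ℝ`, with `U' > 0` on `[0, π/2)` and `U' < 0` on `(π/2, π]`. -/
def IsOddZeroUpGroundState (κ : ℝ) (U : ℝ → ℝ) : Prop :=
  ContDiff ℝ 2 U ∧
  Function.Periodic U (2 * π) ∧
  (∀ x : ℝ, U (-x) = - U x) ∧
  (∀ x : ℝ, κ ^ 2 * deriv (deriv U) x + U x - U x ^ 3 = 0) ∧
  (∀ x ∈ Set.Ico (0 : ℝ) (π / 2), 0 < deriv U x) ∧
  (∀ x ∈ Set.Ioc (π / 2) π, deriv U x < 0)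

/-- The Allen–Cahn energy with diffusion coefficient `κ`. -/
def energy (κ : ℝ) (u : ℝ → ℝ) : ℝ :=
  ∫ x in (-π)..π, (κ ^ 2 / 2 * (deriv u x) ^ 2 + (1 - u x ^ 2) ^ 2 / 4)

/-- The `L²` norm over one period `(-π, π)`. -/
def L2norm (f : ℝ → ℝ) : ℝ := Real.sqrt (∫ x in (-π)..π, (f x) ^ 2)

/-- The `H¹` norm over one period `(-π, π)`. -/
def H1norm (f : ℝ → ℝ) : ℝ := Real.sqrt (L2norm f ^ 2 + L2norm (deriv f) ^ 2)

private lemma integral_combo4 {f g h k : ℝ → ℝ} {a b cf cg ch ck : ℝ}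
    (hf : IntervalIntegrable f volume a b) (hg : IntervalIntegrable g volume a b)
    (hh : IntervalIntegrable h volume a b) (hk : IntervalIntegrable k volume a b) :
    ∫ x in a..b, (cf * f x + cg * g x + ch * h x + ck * k x)
      = cf * (∫ x in a..b, f x) + cg * (∫ x in a..b, g x) + ch * (∫ x in a..b, h x)
        + ck * (∫ x in a..b, k x) := by
  have Hfg := (hf.const_mul cf).add (hg.const_mul cg)
  have Hfgh := Hfg.add (hh.const_mul ch)
  rw [intervalIntegral.integral_add Hfgh (hk.const_mul ck),
      intervalIntegral.integral_add Hfg (hh.const_mul ch),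
      intervalIntegral.integral_add (hf.const_mul cf) (hg.const_mul cg),
      intervalIntegral.integral_const_mul, intervalIntegral.integral_const_mul,
      intervalIntegral.integral_const_mul, intervalIntegral.integral_const_mul]

private lemma pot_ineq {a b : ℝ} (ha1 : -1.1 ≤ a) (ha2 : a ≤ 1.1)
    (hb1 : -1.1 ≤ b) (hb2 : b ≤ 1.1) :
    (1 - b^2)^2/4 - (1 - a^2)^2/4 ≤ (a^3 - a)*(b - a) + 1.315*((b - a)^2) := by
  have h1 : a^2 ≤ 1.21 := by nlinarith
  have h2 : (a + b)^2 ≤ 4.84 := by nlinarith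
  nlinarith [sq_nonneg (b - a),
    mul_nonneg (sq_nonneg (b - a)) (by linarith : (0:ℝ) ≤ 1.21 - a^2),
    mul_nonneg (sq_nonneg (b - a)) (by linarith : (0:ℝ) ≤ 4.84 - (a + b)^2)]

private lemma final_arith (τ A B C D Ew Eu : ℝ) (hτ0 : 0 < τ) (hτ : τ ≤ 1/2)
    (hA0 : 0 ≤ A)
    (hkey : A + 0.81*τ*B + 0.81*τ*C + τ*D = 0)
    (hEb : Ew - Eu ≤ 0.405*B + 0.81*C + D + 1.315*A) :
    1/(5*τ)*A + (0.9:ℝ)^2/2*B + Ew ≤ Eu := by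
  have hτne : τ ≠ 0 := ne_of_gt hτ0
  have hD : D = -(A/τ) - 0.81*B - 0.81*C := by
    field_simp
    linear_combination hkey
  rw [hD] at hEb
  have h2 : (2:ℝ) ≤ 1/τ := by rw [le_div_iff₀ hτ0]; linarith
  have h1 : 1/(5*τ)*A + 1.315*A ≤ A/τ := by
    have e1 : 1/(5*τ) = (1/5)*(1/τ) := by
      rw [one_div, mul_inv, one_div, one_div]
    have e2 : A/τ = A*(1/τ) := by rw [one_div, div_eq_mul_inv]
    rw [e1, e2]
    nlinarith [mul_nonneg hA0 (by linarith : (0:ℝ) ≤ 1/τ - 2)]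
  have h3 : (0.9:ℝ)^2/2 = 0.405 := by norm_num
  rw [h3]
  linarith

/-- Energy inequality for one IMEX step, `κ = 0.9`. -/
theorem imex_energy_inequality (τ : ℝ) (hτ0 : 0 < τ) (hτ : τ ≤ 1 / 2)
    (u w : ℝ → ℝ)
    (hureg : ContDiff ℝ (⊤ : ℕ∞) u) (hwreg : ContDiff ℝ (⊤ : ℕ∞) w)
    (huodd : ∀ x : ℝ, u (-x) = - u x) (hwodd : ∀ x : ℝ, w (-x) = - w x)
    (huper : Function.Periodic u (2 * π)) (hwper : Function.Periodic w (2 * π))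
    (hrel : ∀ x : ℝ, w x - (0.9 : ℝ) ^ 2 * τ * deriv (deriv w) x
      = u x - τ * (u x ^ 3 - u x))
    (hEu : energy 0.9 u ≤ π / 2 - 0.001)
    (hub : ∀ x : ℝ, |u x| ≤ 1.1) (hwb : ∀ x : ℝ, |w x| ≤ 1.1) :
    1 / (5 * τ) * L2norm (fun x : ℝ => w x - u x) ^ 2
      + (0.9 : ℝ) ^ 2 / 2 * L2norm (deriv (fun x : ℝ => w x - u x)) ^ 2
      + energy 0.9 w
      ≤ energy 0.9 u := by
  have hpineg : (-π:ℝ) ≤ π := by linarith [pi_pos]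
  -- regularity
  have hud : Differentiable ℝ u := hureg.differentiable (by simp)
  have hwd : Differentiable ℝ w := hwreg.differentiable (by simp)
  have hu1 : ContDiff ℝ (⊤:ℕ∞) (deriv u) := (contDiff_infty_iff_deriv.mp hureg).2
  have hw1 : ContDiff ℝ (⊤:ℕ∞) (deriv w) := (contDiff_infty_iff_deriv.mp hwreg).2
  have hw1d : Differentiable ℝ (deriv w) := hw1.differentiable (by simp)
  have hcu : Continuous u := hureg.continuous
  have hcw : Continuous w := hwreg.continuous
  have hcu' : Continuous (deriv u) := hu1.continuous
  have hcw' : Continuous (deriv w) := hw1.continuous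
  have hcw'' : Continuous (deriv (deriv w)) := (contDiff_infty_iff_deriv.mp hw1).2.continuous
  -- derivative of the difference
  have hvderiv : ∀ x : ℝ, deriv (fun y => w y - u y) x = deriv w x - deriv u x :=
    fun x => deriv_sub (hwd x) (hud x)
  -- boundary values
  have hπeq : (-π) + 2*π = π := by ring
  have huπ : u π = 0 := by
    have h1 := huper (-π); rw [hπeq] at h1
    have h2 := huodd π
    linarith
  have hwπ : w π = 0 := by
    have h1 := hwper (-π); rw [hπeq] at h1
    have h2 := hwodd π
    linarith
  have huπ' : u (-π) = 0 := by rw [huodd π, huπ]; ring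
  have hwπ' : w (-π) = 0 := by rw [hwodd π, hwπ]; ring
  have hwuπ : w π - u π = 0 := by rw [huπ, hwπ]; ring
  have hwuπ' : w (-π) - u (-π) = 0 := by rw [huπ', hwπ']; ring
  -- integrability of the four basic integrands
  have hiA : IntervalIntegrable (fun x => (w x - u x)^2) volume (-π) π :=
    ((hcw.sub hcu).pow 2).intervalIntegrable _ _
  have hiB : IntervalIntegrable (fun x => (deriv w x - deriv u x)^2) volume (-π) π :=
    ((hcw'.sub hcu').pow 2).intervalIntegrable _ _
  have hiC : IntervalIntegrable (fun x => deriv u x * (deriv w x - deriv u x)) volume (-π) π :=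
    (hcu'.mul (hcw'.sub hcu')).intervalIntegrable _ _
  have hiD : IntervalIntegrable (fun x => (u x^3 - u x) * (w x - u x)) volume (-π) π :=
    (((hcu.pow 3).sub hcu).mul (hcw.sub hcu)).intervalIntegrable _ _
  have hA0 : 0 ≤ ∫ x in (-π)..π, (w x - u x)^2 :=
    intervalIntegral.integral_nonneg hpineg (fun x _ => sq_nonneg _)
  have hB0 : 0 ≤ ∫ x in (-π)..π, (deriv w x - deriv u x)^2 :=
    intervalIntegral.integral_nonneg hpineg (fun x _ => sq_nonneg _)
  -- integration by parts
  have hbd : ∀ x ∈ Set.uIcc (-π) π,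
      HasDerivAt (fun y => w y - u y) (deriv w x - deriv u x) x :=
    fun x _ => ((hwd x).hasDerivAt.sub (hud x).hasDerivAt)
  have hbd2 : ∀ x ∈ Set.uIcc (-π) π, HasDerivAt (deriv w) (deriv (deriv w) x) x :=
    fun x _ => (hw1d x).hasDerivAt
  have hIBP := intervalIntegral.integral_mul_deriv_eq_deriv_mul hbd hbd2
      ((hcw'.sub hcu').intervalIntegrable _ _) (hcw''.intervalIntegrable _ _)
  have hsplit : (∫ x in (-π)..π, (deriv w x - deriv u x) * deriv w x)
      = (∫ x in (-π)..π, (deriv w x - deriv u x)^2)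
        + ∫ x in (-π)..π, deriv u x * (deriv w x - deriv u x) := by
    have h1 : (∫ x in (-π)..π, (deriv w x - deriv u x) * deriv w x)
        = ∫ x in (-π)..π, ((deriv w x - deriv u x)^2
            + deriv u x * (deriv w x - deriv u x)) :=
      intervalIntegral.integral_congr (fun x _ => by ring)
    rw [h1, intervalIntegral.integral_add hiB hiC]
  have hE1 : (∫ x in (-π)..π, (w x - u x) * deriv (deriv w) x)
      = -((∫ x in (-π)..π, (deriv w x - deriv u x)^2)
          + ∫ x in (-π)..π, deriv u x * (deriv w x - deriv u x)) := by
    rw [hIBP, hsplit, hwuπ, hwuπ']; ring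
  -- integral form of the scheme relation
  have hptrel : ∀ x : ℝ, (w x - u x)^2
      = 0.81*τ*((w x - u x) * deriv (deriv w) x) - τ*((u x^3 - u x)*(w x - u x)) := by
    intro x
    linear_combination (w x - u x) * hrel x
  have hiE1 : IntervalIntegrable (fun x => (w x - u x) * deriv (deriv w) x) volume (-π) π :=
    ((hcw.sub hcu).mul hcw'').intervalIntegrable _ _
  have hA : (∫ x in (-π)..π, (w x - u x)^2)
      = 0.81*τ*(∫ x in (-π)..π, (w x - u x) * deriv (deriv w) x)
        - τ*∫ x in (-π)..π, (u x^3 - u x) * (w x - u x) := by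
    have h1 : (∫ x in (-π)..π, (w x - u x)^2)
        = ∫ x in (-π)..π, (0.81*τ*((w x - u x) * deriv (deriv w) x)
            - τ*((u x^3 - u x)*(w x - u x))) :=
      intervalIntegral.integral_congr (fun x _ => hptrel x)
    rw [h1, intervalIntegral.integral_sub (hiE1.const_mul _) (hiD.const_mul _),
        intervalIntegral.integral_const_mul, intervalIntegral.integral_const_mul]
  have hkey : (∫ x in (-π)..π, (w x - u x)^2)
      + 0.81*τ*(∫ x in (-π)..π, (deriv w x - deriv u x)^2)
      + 0.81*τ*(∫ x in (-π)..π, deriv u x * (deriv w x - deriv u x))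
      + τ*(∫ x in (-π)..π, (u x^3 - u x) * (w x - u x)) = 0 := by
    rw [hE1] at hA
    linear_combination hA
  -- energy difference bound
  have hiEw : IntervalIntegrable
      (fun x => (0.9:ℝ)^2/2*(deriv w x)^2 + (1 - w x^2)^2/4) volume (-π) π :=
    ((continuous_const.mul (hcw'.pow 2)).add
      (((continuous_const.sub (hcw.pow 2)).pow 2).div_const 4)).intervalIntegrable _ _
  have hiEu : IntervalIntegrable
      (fun x => (0.9:ℝ)^2/2*(deriv u x)^2 + (1 - u x^2)^2/4) volume (-π) π :=
    ((continuous_const.mul (hcu'.pow 2)).add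
      (((continuous_const.sub (hcu.pow 2)).pow 2).div_const 4)).intervalIntegrable _ _
  have hEdiff : energy 0.9 w - energy 0.9 u
      = ∫ x in (-π)..π, ((0.9:ℝ)^2/2*(deriv w x)^2 + (1 - w x^2)^2/4
          - ((0.9:ℝ)^2/2*(deriv u x)^2 + (1 - u x^2)^2/4)) := by
    rw [energy, energy, ← intervalIntegral.integral_sub hiEw hiEu]
  have hpt : ∀ x ∈ Set.Icc (-π:ℝ) π,
      (0.9:ℝ)^2/2*(deriv w x)^2 + (1 - w x^2)^2/4
          - ((0.9:ℝ)^2/2*(deriv u x)^2 + (1 - u x^2)^2/4)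
      ≤ 0.405*((deriv w x - deriv u x)^2)
        + 0.81*(deriv u x * (deriv w x - deriv u x))
        + 1*((u x^3 - u x)*(w x - u x)) + 1.315*((w x - u x)^2) := by
    intro x _
    obtain ⟨ha1, ha2⟩ := abs_le.mp (hub x)
    obtain ⟨hb1, hb2⟩ := abs_le.mp (hwb x)
    have hgrad : (0.9:ℝ)^2/2*(deriv w x)^2 - (0.9:ℝ)^2/2*(deriv u x)^2
        = 0.405*((deriv w x - deriv u x)^2)
          + 0.81*(deriv u x * (deriv w x - deriv u x)) := by ring
    have hpot := pot_ineq ha1 ha2 hb1 hb2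
    linarith
  have hiL : IntervalIntegrable
      (fun x => (0.9:ℝ)^2/2*(deriv w x)^2 + (1 - w x^2)^2/4
          - ((0.9:ℝ)^2/2*(deriv u x)^2 + (1 - u x^2)^2/4)) volume (-π) π :=
    hiEw.sub hiEu
  have hiR : IntervalIntegrable
      (fun x => 0.405*((deriv w x - deriv u x)^2)
        + 0.81*(deriv u x * (deriv w x - deriv u x))
        + 1*((u x^3 - u x)*(w x - u x)) + 1.315*((w x - u x)^2)) volume (-π) π :=
    (((hiB.const_mul _).add (hiC.const_mul _)).add (hiD.const_mul _)).add (hiA.const_mul _)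
  have hmono := intervalIntegral.integral_mono_on hpineg hiL hiR hpt
  rw [integral_combo4 hiB hiC hiD hiA] at hmono
  have hEbound : energy 0.9 w - energy 0.9 u
      ≤ 0.405*(∫ x in (-π)..π, (deriv w x - deriv u x)^2)
        + 0.81*(∫ x in (-π)..π, deriv u x * (deriv w x - deriv u x))
        + (∫ x in (-π)..π, (u x^3 - u x) * (w x - u x))
        + 1.315*(∫ x in (-π)..π, (w x - u x)^2) := by
    rw [hEdiff]
    linarith [hmono]
  -- rewrite the L² norms
  have hL2v : L2norm (fun x : ℝ => w x - u x) ^ 2 = ∫ x in (-π)..π, (w x - u x)^2 := by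
    simp only [L2norm]
    exact Real.sq_sqrt hA0
  have hL2dv : L2norm (deriv (fun x : ℝ => w x - u x)) ^ 2
      = ∫ x in (-π)..π, (deriv w x - deriv u x)^2 := by
    simp only [L2norm]
    rw [intervalIntegral.integral_congr
      (g := fun x => (deriv w x - deriv u x)^2) (fun x _ => by rw [hvderiv x])]
    exact Real.sq_sqrt hB0
  rw [hL2v, hL2dv]
  exact final_arith τ _ _ _ _ _ _ hτ0 hτ hA0 hkey hEbound
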